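/- Let Γ_Π be the stable translation quiver of unoriented diagonals of a regular heptagon (vertices the diagonals (i,j), arrows (i,j) → (i,j+1) and (i,j) → (i+1,j) whenever both source and target are diagonals, and translation τ(i,j) = (i−1,j−1)), whose mesh category generates the cluster category C_{A_4}. Then the map π: Γ^7_{1,2,2} → Γ_Π sending each coloured oriented single or paired diagonal [i,j]_c to the underlying unoriented diagonal (i,j) is a surjective morphism of stable translation quivers: it commutes with the translations, maps arrows to arrows, and is surjective on vertices and on arrows; consequently it induces a dense and full functor C_{E_6} → C_{A_4}. -/

import Mathlib

/-!
Coloured oriented single and paired diagonals in a regular polygon, following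
L. Lamberti, "Combinatorial model for the cluster categories of type E".

The vertices of the regular `m`-gon `Π` are labelled by `ZMod m` (clockwise).
A coloured oriented diagonal `[i,j]_c` is encoded by the structure `Diag`;
the colour `P` encodes a *paired* diagonal `[i,j]_P = {[i,j]_R, [j,i]_B}`.
-/

inductive Colour : Type
  | R : Colour
  | B : Colour
  | P : Colour
deriving DecidableEq

/-- A coloured oriented (single or paired) diagonal `[i,j]_c` of the regular
`m`-gon (for `m = 0` we interpret `ZMod 0 = ℤ` as the infinite-sided polygon). -/
structure Diag (m : ℕ) where
  i : ZMod m
  j : ZMod m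
  c : Colour
deriving DecidableEq

/-- The simultaneous change of colour and orientation:
`ρ([i,j]_R) = [j,i]_B`, `ρ([i,j]_B) = [j,i]_R`, `ρ([i,j]_P) = [i,j]_P`. -/
def rho {m : ℕ} : Diag m → Diag m
  | ⟨i, j, Colour.R⟩ => ⟨j, i, Colour.B⟩
  | ⟨i, j, Colour.B⟩ => ⟨j, i, Colour.R⟩
  | ⟨i, j, Colour.P⟩ => ⟨i, j, Colour.P⟩

/-- The anticlockwise rotation `[i,j]_c ↦ [i-1,j-1]_c`. -/
def shiftD {m : ℕ} (d : Diag m) : Diag m := ⟨d.i - 1, d.j - 1, d.c⟩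

/-- The slice of `Π_{r,s,t}` based at the vertex `i` of `Π`:
the paired diagonals `[i,i+2]_P, …, [i,i+r+2]_P`, the red single diagonals
`[i,i+r+3]_R, …, [i,i+r+s+2]_R` and the blue single diagonals
`[i+r+3,i]_B, …, [i+r+t+2,i]_B`. -/
def PiSetAt (r s t : ℕ) {m : ℕ} (i : ZMod m) : Set (Diag m) :=
  {d | (∃ k : ℕ, 2 ≤ k ∧ k ≤ r + 2 ∧ d = ⟨i, i + (k : ZMod m), Colour.P⟩) ∨
       (∃ k : ℕ, r + 3 ≤ k ∧ k ≤ r + s + 2 ∧ d = ⟨i, i + (k : ZMod m), Colour.R⟩) ∨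
       (∃ k : ℕ, r + 3 ≤ k ∧ k ≤ r + t + 2 ∧ d = ⟨i + (k : ZMod m), i, Colour.B⟩)}

/-- The set `Π_{r,s,t}` of coloured oriented single and paired diagonals of the
regular `m`-gon associated to the tree `T_{r,s,t}`. -/
def PiSet (r s t m : ℕ) : Set (Diag m) := ⋃ i : ZMod m, PiSetAt r s t i

open Classical in
/-- The translation `τ` on coloured oriented diagonals: the anticlockwise
rotation `[i,j]_c ↦ [i-1,j-1]_c`, composed with `ρ^{m}` on the first slice
`Π_{r,s,t}|_1` when the tree is symmetric (`s = t`). -/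
noncomputable def tauD (r s t : ℕ) {m : ℕ} (d : Diag m) : Diag m :=
  if s = t ∧ d ∈ PiSetAt r s t (1 : ZMod m) then rho^[m] (shiftD d) else shiftD d

/-- Minimal clockwise rotations (before the colour adjustment at the seam):
`[k,l]_c → [k,l+1]_c`, `[k,l]_c → [k+1,l]_c`, together with
`[k,k+r+2]_P → [k,k+r+3]_R`, `[k,k+r+2]_P → [k+r+3,k]_B`,
`[k,k+r+3]_R → [k+1,k+r+3]_P` and `[k+r+3,k]_B → [k+1,k+r+3]_P`. -/
def Rot (r : ℕ) {m : ℕ} (a b : Diag m) : Prop :=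
  b = ⟨a.i, a.j + 1, a.c⟩ ∨ b = ⟨a.i + 1, a.j, a.c⟩ ∨
  (∃ k : ZMod m, a = ⟨k, k + ((r : ZMod m) + 2), Colour.P⟩ ∧
    (b = ⟨k, k + ((r : ZMod m) + 3), Colour.R⟩ ∨
     b = ⟨k + ((r : ZMod m) + 3), k, Colour.B⟩)) ∨
  (∃ k : ZMod m,
    (a = ⟨k, k + ((r : ZMod m) + 3), Colour.R⟩ ∨
     a = ⟨k + ((r : ZMod m) + 3), k, Colour.B⟩) ∧
    b = ⟨k + 1, k + ((r : ZMod m) + 3), Colour.P⟩)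

/-- In the symmetric case `s = t` with an odd-sided polygon, the arrows whose
source lies in `τ(Π_{r,t,t}|_1)` and whose (unadjusted) target lies in the
first slice `Π_{r,t,t}|_1` additionally change colour and orientation. -/
def SeamTwist (r s t m : ℕ) (a b₀ : Diag m) : Prop :=
  s = t ∧ Odd m ∧ a ∈ (tauD r s t) '' (PiSetAt r s t (1 : ZMod m)) ∧
    b₀ ∈ PiSetAt r s t (1 : ZMod m)

/-- The arrows of the quiver `Γ^{m}_{r,s,t}`: minimal clockwise rotations
between elements of `Π_{r,s,t}`, adjusted by `ρ` at the seam. -/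
def ArrowD (r s t m : ℕ) (a b : Diag m) : Prop :=
  a ∈ PiSet r s t m ∧ b ∈ PiSet r s t m ∧
    ∃ b₀, Rot r a b₀ ∧
      ((SeamTwist r s t m a b₀ ∧ b = rho b₀) ∨ (¬ SeamTwist r s t m a b₀ ∧ b = b₀))

/-- The underlying unoriented diagonal (chord) of a coloured oriented
single or paired diagonal. -/
def uchord (d : Diag 7) : Sym2 (ZMod 7) := Sym2.mk d.i d.j

/-- Unoriented diagonals of the heptagon: chords `(a,b)` with `a`, `b`
distinct and non-adjacent vertices. -/
def IsUDiag (u : Sym2 (ZMod 7)) : Prop :=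
  ∃ a b : ZMod 7, u = Sym2.mk a b ∧ b ≠ a ∧ b ≠ a + 1 ∧ a ≠ b + 1

/-- The arrows of the Caldero–Chapoton–Schiffler quiver `Γ_Π` of unoriented
diagonals of the heptagon: `(a,b) → (a,b+1)` and `(a,b) → (a+1,b)` whenever
both the source and the target are diagonals. -/
def UArrow (u v : Sym2 (ZMod 7)) : Prop :=
  IsUDiag u ∧ IsUDiag v ∧
    ∃ a b : ZMod 7, u = Sym2.mk a b ∧
      (v = Sym2.mk a (b + 1) ∨ v = Sym2.mk (a + 1) b)

/-- The translation `τ(a,b) = (a-1,b-1)` of `Γ_Π`. -/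
def utau : Sym2 (ZMod 7) → Sym2 (ZMod 7) := Sym2.map (fun x => x - 1)

section Aux

instance : Fintype Colour :=
  ⟨⟨{Colour.R, Colour.B, Colour.P}, by decide⟩, fun x => by cases x <;> decide⟩

instance : Fintype (Diag 7) :=
  Fintype.ofEquiv (ZMod 7 × ZMod 7 × Colour)
    { toFun := fun p => ⟨p.1, p.2.1, p.2.2⟩
      invFun := fun d => (d.i, d.j, d.c)
      left_inv := fun _ => rfl
      right_inv := fun _ => rfl }

def memAt (i : ZMod 7) (d : Diag 7) : Prop :=
  d = ⟨i, i + 2, Colour.P⟩ ∨ d = ⟨i, i + 3, Colour.P⟩ ∨ d = ⟨i, i + 4, Colour.R⟩ ∨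
  d = ⟨i, i + 5, Colour.R⟩ ∨ d = ⟨i + 4, i, Colour.B⟩ ∨ d = ⟨i + 5, i, Colour.B⟩

instance (i : ZMod 7) (d : Diag 7) : Decidable (memAt i d) := by
  unfold memAt; infer_instance

lemma memAt_iff (i : ZMod 7) (d : Diag 7) : d ∈ PiSetAt 1 2 2 i ↔ memAt i d := by
  constructor
  · rintro (⟨k, h1, h2, rfl⟩ | ⟨k, h1, h2, rfl⟩ | ⟨k, h1, h2, rfl⟩) <;>
      interval_cases k <;> simp [memAt] <;> norm_num
  · rintro (rfl | rfl | rfl | rfl | rfl | rfl)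
    · exact Or.inl ⟨2, by norm_num, by norm_num, by norm_num⟩
    · exact Or.inl ⟨3, by norm_num, by norm_num, by norm_num⟩
    · exact Or.inr (Or.inl ⟨4, by norm_num, by norm_num, by norm_num⟩)
    · exact Or.inr (Or.inl ⟨5, by norm_num, by norm_num, by norm_num⟩)
    · exact Or.inr (Or.inr ⟨4, by norm_num, by norm_num, by norm_num⟩)
    · exact Or.inr (Or.inr ⟨5, by norm_num, by norm_num, by norm_num⟩)

def memD (d : Diag 7) : Prop := ∃ i : ZMod 7, memAt i d

instance (d : Diag 7) : Decidable (memD d) := by unfold memD; infer_instance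

lemma memD_iff (d : Diag 7) : d ∈ PiSet 1 2 2 7 ↔ memD d := by
  simp only [PiSet, Set.mem_iUnion, memD, memAt_iff]

end Aux
lemma rho_rho {m : ℕ} (d : Diag m) : rho (rho d) = d := by
  rcases d with ⟨i, j, (_ | _ | _)⟩ <;> rfl

lemma rho7 (d : Diag 7) : rho^[7] d = rho d := by
  simp only [Function.iterate_succ, Function.iterate_zero, Function.comp_apply, id_eq]
  rw [rho_rho, rho_rho, rho_rho]

def tau' (d : Diag 7) : Diag 7 :=
  if memAt 1 d then rho (shiftD d) else shiftD d

lemma tauD_eq (d : Diag 7) : tauD 1 2 2 d = tau' d := by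
  unfold tauD tau'
  by_cases h : memAt 1 d
  · rw [if_pos ⟨rfl, (memAt_iff 1 d).mpr h⟩, if_pos h, rho7]
  · rw [if_neg, if_neg h]
    rintro ⟨-, hm⟩
    exact h ((memAt_iff 1 d).mp hm)

def Tw (a : Diag 7) : Prop :=
  a = ⟨0, 2, Colour.P⟩ ∨ a = ⟨0, 3, Colour.P⟩ ∨ a = ⟨0, 4, Colour.R⟩ ∨
  a = ⟨0, 5, Colour.R⟩ ∨ a = ⟨4, 0, Colour.B⟩ ∨ a = ⟨5, 0, Colour.B⟩

instance (a : Diag 7) : Decidable (Tw a) := by unfold Tw; infer_instance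

lemma seam_iff (a b₀ : Diag 7) : SeamTwist 1 2 2 7 a b₀ ↔ (Tw a ∧ memAt 1 b₀) := by
  constructor
  · rintro ⟨-, -, ⟨d, hd, rfl⟩, hb⟩
    refine ⟨?_, (memAt_iff 1 b₀).mp hb⟩
    rw [tauD_eq]
    have hd' := (memAt_iff 1 d).mp hd
    unfold tau'
    rw [if_pos hd']
    rcases hd' with rfl | rfl | rfl | rfl | rfl | rfl <;> decide
  · rintro ⟨ha, hb⟩
    refine ⟨rfl, ⟨3, by norm_num⟩, ?_, (memAt_iff 1 b₀).mpr hb⟩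
    rcases ha with rfl | rfl | rfl | rfl | rfl | rfl
    · exact ⟨⟨1, 3, Colour.P⟩, (memAt_iff _ _).mpr (by decide), by rw [tauD_eq]; decide⟩
    · exact ⟨⟨1, 4, Colour.P⟩, (memAt_iff _ _).mpr (by decide), by rw [tauD_eq]; decide⟩
    · exact ⟨⟨5, 1, Colour.B⟩, (memAt_iff _ _).mpr (by decide), by rw [tauD_eq]; decide⟩
    · exact ⟨⟨6, 1, Colour.B⟩, (memAt_iff _ _).mpr (by decide), by rw [tauD_eq]; decide⟩
    · exact ⟨⟨1, 5, Colour.R⟩, (memAt_iff _ _).mpr (by decide), by rw [tauD_eq]; decide⟩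
    · exact ⟨⟨1, 6, Colour.R⟩, (memAt_iff _ _).mpr (by decide), by rw [tauD_eq]; decide⟩
def ERot (a : Diag 7) (Q : Diag 7 → Prop) : Prop :=
  Q ⟨a.i, a.j + 1, a.c⟩ ∨ Q ⟨a.i + 1, a.j, a.c⟩ ∨
  (a.c = Colour.P ∧ a.j = a.i + 3 ∧ (Q ⟨a.i, a.i + 4, Colour.R⟩ ∨ Q ⟨a.i + 4, a.i, Colour.B⟩)) ∨
  (a.c = Colour.R ∧ a.j = a.i + 4 ∧ Q ⟨a.i + 1, a.i + 4, Colour.P⟩) ∨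
  (a.c = Colour.B ∧ a.i = a.j + 4 ∧ Q ⟨a.j + 1, a.j + 4, Colour.P⟩)

instance (a : Diag 7) (Q : Diag 7 → Prop) [DecidablePred Q] : Decidable (ERot a Q) := by
  unfold ERot; infer_instance

lemma cast1 : ((1 : ℕ) : ZMod 7) = 1 := by norm_num

lemma ERot_iff (a : Diag 7) (Q : Diag 7 → Prop) :
    (∃ b₀, Rot 1 a b₀ ∧ Q b₀) ↔ ERot a Q := by
  unfold Rot ERot
  rw [cast1]
  constructor
  · rintro ⟨b₀, (rfl | rfl | ⟨k, rfl, (rfl | rfl)⟩ | ⟨k, (rfl | rfl), rfl⟩), hQ⟩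
    · exact Or.inl hQ
    · exact Or.inr (Or.inl hQ)
    · exact Or.inr (Or.inr (Or.inl ⟨rfl, by norm_num, Or.inl (by norm_num; exact hQ)⟩))
    · exact Or.inr (Or.inr (Or.inl ⟨rfl, by norm_num, Or.inr (by norm_num; exact hQ)⟩))
    · exact Or.inr (Or.inr (Or.inr (Or.inl ⟨rfl, by norm_num, by norm_num; exact hQ⟩)))
    · exact Or.inr (Or.inr (Or.inr (Or.inr ⟨rfl, by push_cast; ring, by norm_num; exact hQ⟩)))
  · obtain ⟨i, j, c⟩ := a
    dsimp only
    rintro (h | h | ⟨rfl, rfl, (h | h)⟩ | ⟨rfl, rfl, h⟩ | ⟨rfl, rfl, h⟩)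
    · exact ⟨_, Or.inl rfl, h⟩
    · exact ⟨_, Or.inr (Or.inl rfl), h⟩
    · exact ⟨⟨i, i + 4, Colour.R⟩, Or.inr (Or.inr (Or.inl ⟨i, by norm_num, Or.inl (by norm_num)⟩)), h⟩
    · exact ⟨⟨i + 4, i, Colour.B⟩, Or.inr (Or.inr (Or.inl ⟨i, by norm_num, Or.inr (by norm_num)⟩)), h⟩
    · exact ⟨⟨i + 1, i + 4, Colour.P⟩, Or.inr (Or.inr (Or.inr ⟨i, Or.inl (by norm_num), by norm_num⟩)), h⟩
    · exact ⟨⟨j + 1, j + 4, Colour.P⟩, Or.inr (Or.inr (Or.inr ⟨j, Or.inr (by norm_num), by norm_num⟩)), h⟩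

def ArrowD' (a b : Diag 7) : Prop :=
  ERot a (fun b₀ => ((Tw a ∧ memAt 1 b₀) ∧ b = rho b₀) ∨ (¬(Tw a ∧ memAt 1 b₀) ∧ b = b₀)) ∧
    memD a ∧ memD b

instance (a b : Diag 7) : Decidable (ArrowD' a b) := by unfold ArrowD'; infer_instance

lemma arrow_iff (a b : Diag 7) : ArrowD 1 2 2 7 a b ↔ ArrowD' a b := by
  unfold ArrowD ArrowD'
  rw [memD_iff, memD_iff, ← ERot_iff]
  constructor
  · rintro ⟨ha, hb, b₀, hr, h⟩
    refine ⟨⟨b₀, hr, ?_⟩, ha, hb⟩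
    rcases h with ⟨hs, rfl⟩ | ⟨hs, rfl⟩
    · exact Or.inl ⟨(seam_iff a _).mp hs, rfl⟩
    · exact Or.inr ⟨fun h => hs ((seam_iff a _).mpr h), rfl⟩
  · rintro ⟨⟨b₀, hr, h⟩, ha, hb⟩
    refine ⟨ha, hb, b₀, hr, ?_⟩
    rcases h with ⟨hs, rfl⟩ | ⟨hs, rfl⟩
    · exact Or.inl ⟨(seam_iff a _).mpr hs, rfl⟩
    · exact Or.inr ⟨fun h => hs ((seam_iff a _).mp h), rfl⟩

instance : DecidablePred IsUDiag := fun u => by unfold IsUDiag; infer_instance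

instance (u v : Sym2 (ZMod 7)) : Decidable (UArrow u v) := by unfold UArrow; infer_instance

set_option maxHeartbeats 2000000 in
set_option maxRecDepth 100000 in
lemma dec1 : ∀ d : Diag 7, memD d → IsUDiag (uchord d) := by decide

set_option maxHeartbeats 2000000 in
set_option maxRecDepth 100000 in
lemma dec2 : ∀ d : Diag 7, memD d → uchord (tau' d) = utau (uchord d) := by decide

set_option maxHeartbeats 16000000 in
set_option maxRecDepth 100000 in
lemma dec3 : ∀ a b : Diag 7, ArrowD' a b → UArrow (uchord a) (uchord b) := by decide

set_option maxHeartbeats 8000000 in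
set_option maxRecDepth 100000 in
lemma dec4 : ∀ u : Sym2 (ZMod 7), IsUDiag u → ∃ d, memD d ∧ uchord d = u := by decide

set_option maxHeartbeats 16000000 in
set_option maxRecDepth 100000 in
lemma dec5 : ∀ u v : Sym2 (ZMod 7), UArrow u v →
    ∃ a, uchord a = u ∧ ∃ b, uchord b = v ∧ ArrowD' a b := by decide

/-- Corollary 4.4. The map `π : Γ^7_{1,2,2} → Γ_Π` sending
each coloured oriented single or paired diagonal `[i,j]_c` to the underlying
unoriented diagonal `(i,j)` is a surjective morphism of stable translation
quivers: it maps vertices to vertices and commutes with the translations,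
it maps arrows to arrows, and it is surjective on vertices and on arrows.
(Consequently it induces a dense and full functor `C_{E₆} → C_{A₄}` between
the corresponding cluster categories.) -/
theorem projection_to_CCS_heptagon :
    (∀ d ∈ PiSet 1 2 2 7, IsUDiag (uchord d)) ∧
    (∀ d ∈ PiSet 1 2 2 7, uchord (tauD 1 2 2 d) = utau (uchord d)) ∧
    (∀ a b : Diag 7, ArrowD 1 2 2 7 a b → UArrow (uchord a) (uchord b)) ∧
    (∀ u, IsUDiag u → ∃ d ∈ PiSet 1 2 2 7, uchord d = u) ∧
    (∀ u v, UArrow u v →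
      ∃ a b : Diag 7, ArrowD 1 2 2 7 a b ∧ uchord a = u ∧ uchord b = v) := by
  refine ⟨?_, ?_, ?_, ?_, ?_⟩
  · intro d hd
    exact dec1 d ((memD_iff d).mp hd)
  · intro d hd
    rw [tauD_eq]
    exact dec2 d ((memD_iff d).mp hd)
  · intro a b h
    exact dec3 a b ((arrow_iff a b).mp h)
  · intro u hu
    obtain ⟨d, hd, h⟩ := dec4 u hu
    exact ⟨d, (memD_iff d).mpr hd, h⟩
  · intro u v h
    obtain ⟨a, ha, b, hb, hab⟩ := dec5 u v h
    exact ⟨a, b, (arrow_iff a b).mpr hab, ha, hb⟩
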